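/- Let b = (b_k)_{k≥1} be non-negative reals such that Σ_{k≥1} b_k e^{−kα} converges for every α > 0. Then for every α > 0 and every real u: log f_b(e^{−α}) − Re(log f_b(e^{−α+2πiu})) = (1/2) Σ_{k≥1} b_k log(1 + 4 e^{−kα} sin²(πku)/(1 − e^{−kα})²) ≥ (log 5 / 2) Σ_{k≥1} b_k e^{−kα} sin²(πku), where log f_b(x) = −Σ_{k≥1} b_k log(1 − x^k) (principal branch). -/

import Mathlib

open Filter Topology Asymptotics MeasureTheory Real

noncomputable section

/-- `F_b(x) = -∑_{k≥1} b_k log(1 - x^k)` (so that `f_b = exp F_b`). -/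
def Fb (b : ℕ → ℝ) (x : ℝ) : ℝ := -∑' k : ℕ, b (k + 1) * Real.log (1 - x ^ (k + 1))

/-- Complex version of `log f_b` (principal branch). -/
def FbC (b : ℕ → ℝ) (x : ℂ) : ℂ := -∑' k : ℕ, (b (k + 1) : ℂ) * Complex.log (1 - x ^ (k + 1))

/-- `f_b(x) = ∏_{k≥1} (1 - x^k)^{-b_k}`. -/
def fb (b : ℕ → ℝ) (x : ℝ) : ℝ := Real.exp (Fb b x)

/-- Complex version of `f_b`. -/
def fbC (b : ℕ → ℝ) (x : ℂ) : ℂ := Complex.exp (FbC b x)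

/-- `F_{m,b}(x) = -∑_{k=1}^m b_k log(1 - x^k)`. -/
def Fmb (b : ℕ → ℝ) (m : ℕ) (x : ℝ) : ℝ := -∑ k ∈ Finset.Icc 1 m, b k * Real.log (1 - x ^ k)

/-- `f_{m,b}(x) = ∏_{k=1}^m (1 - x^k)^{-b_k}`. -/
def fmb (b : ℕ → ℝ) (m : ℕ) (x : ℝ) : ℝ := Real.exp (Fmb b m x)

/-- `𝒜_b(r) = r F_b'(r)`. -/
def Abf (b : ℕ → ℝ) (r : ℝ) : ℝ := r * deriv (Fb b) r

/-- `ℬ_b(r) = r² F_b''(r) + r F_b'(r)`. -/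
def Bbf (b : ℕ → ℝ) (r : ℝ) : ℝ :=
  r ^ 2 * iteratedDeriv 2 (Fb b) r + r * deriv (Fb b) r

/-- Meinardus condition (M1): the Dirichlet series `D(s) = ∑_{k≥1} b_k k^{-s}` converges for
`Re s > ρ` and `Dc` is its analytic continuation to `{Re s ≥ -C₀}`, analytic there except for a
simple pole at `s = ρ` with residue `A > 0`. -/
def M1 (b : ℕ → ℝ) (ρ C₀ A : ℝ) (Dc : ℂ → ℂ) : Prop :=
  0 < ρ ∧ 0 < C₀ ∧ C₀ < 1 ∧ 0 < A ∧
  (∀ s : ℂ, ρ < s.re →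
    HasSum (fun k : ℕ => (b (k + 1) : ℂ) * ((k + 1 : ℕ) : ℂ) ^ (-s)) (Dc s)) ∧
  (∀ s : ℂ, -C₀ ≤ s.re → s ≠ (ρ : ℂ) → DifferentiableAt ℂ Dc s) ∧
  (∃ φ : ℂ → ℂ, (∀ s : ℂ, -C₀ ≤ s.re → DifferentiableAt ℂ φ s) ∧
    ∀ s : ℂ, -C₀ ≤ s.re → s ≠ (ρ : ℂ) → Dc s = (A : ℂ) / (s - (ρ : ℂ)) + φ s)

/-- Meinardus condition (M2): the continuation `Dc` is of finite order `C₁` in `{Re s ≥ -C₀}`,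
i.e. `Dc s = O(|Im s|^{C₁})` as `|Im s| → ∞`, uniformly in `Re s ≥ -C₀`. -/
def M2 (C₀ C₁ : ℝ) (Dc : ℂ → ℂ) : Prop :=
  0 < C₁ ∧ ∃ K y₀ : ℝ, ∀ s : ℂ, -C₀ ≤ s.re → y₀ ≤ |s.im| → ‖Dc s‖ ≤ K * |s.im| ^ C₁

/-- Meinardus condition (M3): `∑_{k≥1} b_k e^{-kα} sin²(πku) ≥ C₂ α^{-ε}` for all small `α > 0`
and all `u` with `α/(2π) < |u| ≤ 1/2`. -/
def M3 (b : ℕ → ℝ) : Prop :=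
  ∃ ε C₂ : ℝ, 0 < ε ∧ 0 < C₂ ∧ ∃ α₀ : ℝ, 0 < α₀ ∧ ∀ α : ℝ, 0 < α → α ≤ α₀ →
    ∀ u : ℝ, α / (2 * π) < |u| → |u| ≤ 1 / 2 →
      C₂ * α ^ (-ε) ≤
        ∑' k : ℕ, b (k + 1) * Real.exp (-((k : ℝ) + 1) * α) * Real.sin (π * ((k : ℝ) + 1) * u) ^ 2

/-- `h = A Γ(ρ+1) ζ(ρ+1)`. -/
def hMein (ρ A : ℝ) : ℝ := A * Real.Gamma (ρ + 1) * (riemannZeta ((ρ : ℂ) + 1)).re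

/-- The normalizing constant `a(n) = (A Γ(ρ+1) ζ(ρ+1) / n)^{1/(ρ+1)}`. -/
def aM (ρ A : ℝ) (n : ℕ) : ℝ := (hMein ρ A / n) ^ ((1 : ℝ) / (ρ + 1))


lemma aux_log5 {x : ℝ} (h0 : 0 ≤ x) (h1 : x ≤ 1) :
    Real.log 5 * x ≤ Real.log (1 + 4 * x) := by
  have hc := (strictConcaveOn_log_Ioi.concaveOn).2 (Set.mem_Ioi.mpr one_pos)
    (Set.mem_Ioi.mpr (by norm_num : (0:ℝ) < 5)) (by linarith : (0:ℝ) ≤ 1 - x) h0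
    (by ring : (1 - x) + x = 1)
  rw [smul_eq_mul, smul_eq_mul, smul_eq_mul, smul_eq_mul, Real.log_one] at hc
  have heq : (1 - x) * 1 + x * 5 = 1 + 4 * x := by ring
  rw [heq] at hc
  linarith

lemma aux_neg_log_le {t : ℝ} (h0 : 0 ≤ t) (h1 : t < 1) :
    -Real.log (1 - t) ≤ t / (1 - t) := by
  have h1t : (0:ℝ) < 1 - t := by linarith
  have h := Real.log_le_sub_one_of_pos (show (0:ℝ) < (1-t)⁻¹ by positivity)
  rw [Real.log_inv] at h
  have h2 : (1 - t)⁻¹ - 1 = t / (1 - t) := by field_simp; ring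
  linarith

lemma aux_log_abs {q s : ℝ} (hq0 : 0 < q) (hq1 : q < 1) (w : ℂ)
    (hns : Complex.normSq (1 - w) = (1 - q) ^ 2 + 4 * q * s ^ 2) :
    Real.log (‖1 - w‖) =
      Real.log (1 - q) + (1 / 2) * Real.log (1 + 4 * q * s ^ 2 / (1 - q) ^ 2) := by
  have h1q : (0:ℝ) < 1 - q := by linarith
  have hD : (0:ℝ) < 1 + 4 * q * s ^ 2 / (1 - q) ^ 2 := by positivity
  have hsq : ‖1 - w‖ ^ 2 = (1 - q) ^ 2 * (1 + 4 * q * s ^ 2 / (1 - q) ^ 2) := by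
    rw [Complex.sq_norm, hns]; field_simp
  have habs : (0:ℝ) < ‖1 - w‖ := by
    rcases (norm_nonneg (1 - w)).lt_or_eq with h | h
    · exact h
    · exfalso
      have : ‖1 - w‖ ^ 2 = 0 := by rw [← h]; norm_num
      rw [hsq] at this
      have := mul_pos (pow_pos h1q 2) hD
      linarith
  have h1 : Real.log (‖1 - w‖ ^ 2) = 2 * Real.log (‖1 - w‖) := by
    rw [Real.log_pow]; push_cast; ring
  have h2 : Real.log ((1 - q) ^ 2 * (1 + 4 * q * s ^ 2 / (1 - q) ^ 2))
      = 2 * Real.log (1 - q) + Real.log (1 + 4 * q * s ^ 2 / (1 - q) ^ 2) := by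
    rw [Real.log_mul (by positivity) (by positivity), Real.log_pow]
    push_cast; ring
  rw [hsq] at h1
  rw [h2] at h1
  linarith

lemma aux_normSq (α u : ℝ) (k : ℕ) :
    Complex.normSq (1 - (Complex.exp (-(α:ℂ) + 2*(π:ℂ)*Complex.I*(u:ℂ)))^(k+1)) =
      (1 - Real.exp (-((k:ℝ)+1)*α))^2
        + 4*Real.exp (-((k:ℝ)+1)*α)*Real.sin (π*((k:ℝ)+1)*u)^2 := by
  have hz : (Complex.exp (-(α:ℂ) + 2*(π:ℂ)*Complex.I*(u:ℂ)))^(k+1)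
      = Complex.exp (((k+1:ℕ):ℂ) * (-(α:ℂ) + 2*(π:ℂ)*Complex.I*(u:ℂ))) :=
    (Complex.exp_nat_mul _ (k+1)).symm
  have hre : ((((k+1:ℕ)):ℂ) * (-(α:ℂ) + 2*(π:ℂ)*Complex.I*(u:ℂ))).re = -((k:ℝ)+1)*α := by
    simp [Complex.mul_re, Complex.mul_im, Complex.add_re, Complex.add_im]
    push_cast; ring
  have him : ((((k+1:ℕ)):ℂ) * (-(α:ℂ) + 2*(π:ℂ)*Complex.I*(u:ℂ))).im
      = 2*(π*((k:ℝ)+1)*u) := by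
    simp [Complex.mul_re, Complex.mul_im, Complex.add_re, Complex.add_im]
    push_cast; ring
  rw [hz]
  rw [Complex.normSq_apply, Complex.sub_re, Complex.sub_im, Complex.exp_re, Complex.exp_im,
    hre, him]
  have hc : Real.cos (2*(π*((k:ℝ)+1)*u)) = 1 - 2*Real.sin (π*((k:ℝ)+1)*u)^2 := by
    rw [Real.cos_two_mul]
    have := Real.sin_sq_add_cos_sq (π*((k:ℝ)+1)*u)
    linarith
  have hpy := Real.sin_sq_add_cos_sq (2*(π*((k:ℝ)+1)*u))
  rw [hc] at hpy
  simp only [Complex.one_re, Complex.one_im]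
  rw [hc]
  linear_combination (Real.exp (-((k:ℝ)+1)*α))^2 * hpy

lemma aux_self_bound (a q : ℝ) (ha : 0 < a) (haq : a ≤ q) (hq : q < 1) :
    a^2*(1-a)⁻¹/2 + a ≤ (q*(1-q)⁻¹/2 + 1)*a := by
  have h1 : (0:ℝ) < 1 - q := by linarith
  have h2 : (0:ℝ) < 1 - a := by linarith
  have h3 : (1-a)⁻¹ ≤ (1-q)⁻¹ := by gcongr
  have h5 : a^2*(1-a)⁻¹ ≤ (q*a)*(1-q)⁻¹ :=
    calc a^2*(1-a)⁻¹ ≤ a^2*(1-q)⁻¹ := by gcongr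
      _ ≤ (q*a)*(1-q)⁻¹ :=
        mul_le_mul_of_nonneg_right (by nlinarith) (by positivity)
  nlinarith

theorem statement13 (b : ℕ → ℝ) (hb : ∀ k, 0 ≤ b k)
    (hsum : ∀ α : ℝ, 0 < α →
      Summable fun k : ℕ => b (k + 1) * Real.exp (-((k : ℝ) + 1) * α)) :
    ∀ α : ℝ, 0 < α → ∀ u : ℝ,
      (Fb b (Real.exp (-α))
          - (FbC b (Complex.exp (-(α : ℂ) + 2 * (π : ℂ) * Complex.I * (u : ℂ)))).re
        = (1 / 2) * ∑' k : ℕ, b (k + 1) *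
            Real.log (1 + 4 * Real.exp (-((k : ℝ) + 1) * α) * Real.sin (π * ((k : ℝ) + 1) * u) ^ 2
              / (1 - Real.exp (-((k : ℝ) + 1) * α)) ^ 2)) ∧
      ((Real.log 5 / 2) * ∑' k : ℕ, b (k + 1) * Real.exp (-((k : ℝ) + 1) * α) *
            Real.sin (π * ((k : ℝ) + 1) * u) ^ 2
        ≤ Fb b (Real.exp (-α))
          - (FbC b (Complex.exp (-(α : ℂ) + 2 * (π : ℂ) * Complex.I * (u : ℂ)))).re) := by
  intro α hα u
  have hq0 : (0:ℝ) < Real.exp (-α) := Real.exp_pos _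
  have hq1 : Real.exp (-α) < 1 := by
    have := Real.exp_lt_exp.mpr (show -α < 0 by linarith)
    simpa using this
  have hQpos : ∀ k : ℕ, 0 < Real.exp (-((k:ℝ)+1)*α) := fun k => Real.exp_pos _
  have hQlt : ∀ k : ℕ, Real.exp (-((k:ℝ)+1)*α) < 1 := by
    intro k
    have hk : (0:ℝ) ≤ (k:ℝ) := Nat.cast_nonneg k
    have := Real.exp_lt_exp.mpr (show -((k:ℝ)+1)*α < 0 by nlinarith)
    simpa using this
  have hQle : ∀ k : ℕ, Real.exp (-((k:ℝ)+1)*α) ≤ Real.exp (-α) := by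
    intro k
    have hk : (0:ℝ) ≤ (k:ℝ) := Nat.cast_nonneg k
    exact Real.exp_le_exp.mpr (by nlinarith)
  have hsum0 := hsum α hα
  -- S1
  have S1 : Summable (fun k : ℕ => b (k+1) * Real.log (1 - Real.exp (-((k:ℝ)+1)*α))) := by
    rw [← summable_neg_iff]
    apply Summable.of_nonneg_of_le
      (f := fun k : ℕ => (1 - Real.exp (-α))⁻¹ * (b (k+1) * Real.exp (-((k:ℝ)+1)*α)))
    · intro k
      have hl : Real.log (1 - Real.exp (-((k:ℝ)+1)*α)) ≤ 0 :=
        Real.log_nonpos (by linarith [hQlt k]) (by linarith [hQpos k])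
      have := mul_nonpos_of_nonneg_of_nonpos (hb (k+1)) hl
      simpa using this
    · intro k
      have hb' := hb (k+1)
      have h1 := aux_neg_log_le (le_of_lt (hQpos k)) (hQlt k)
      have h1q : (0:ℝ) < 1 - Real.exp (-α) := by linarith
      have h1qk : (0:ℝ) < 1 - Real.exp (-((k:ℝ)+1)*α) := by linarith [hQlt k]
      have h2 : Real.exp (-((k:ℝ)+1)*α) / (1 - Real.exp (-((k:ℝ)+1)*α))
          ≤ Real.exp (-((k:ℝ)+1)*α) / (1 - Real.exp (-α)) := by
        rw [div_le_div_iff₀ h1qk h1q]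
        nlinarith [hQle k, (hQpos k).le]
      calc -(b (k+1) * Real.log (1 - Real.exp (-((k:ℝ)+1)*α)))
          = b (k+1) * (-Real.log (1 - Real.exp (-((k:ℝ)+1)*α))) := by ring
        _ ≤ b (k+1) * (Real.exp (-((k:ℝ)+1)*α) / (1 - Real.exp (-((k:ℝ)+1)*α))) :=
            mul_le_mul_of_nonneg_left h1 hb'
        _ ≤ b (k+1) * (Real.exp (-((k:ℝ)+1)*α) / (1 - Real.exp (-α))) :=
            mul_le_mul_of_nonneg_left h2 hb'
        _ = (1 - Real.exp (-α))⁻¹ * (b (k+1) * Real.exp (-((k:ℝ)+1)*α)) := by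
            field_simp
    · exact hsum0.mul_left _
  -- S2
  have S2 : Summable (fun k : ℕ => b (k+1) *
      Real.log (1 + 4 * Real.exp (-((k:ℝ)+1)*α) * Real.sin (π*((k:ℝ)+1)*u)^2
        / (1 - Real.exp (-((k:ℝ)+1)*α))^2)) := by
    apply Summable.of_nonneg_of_le
      (f := fun k : ℕ => (4 * ((1 - Real.exp (-α))^2)⁻¹) * (b (k+1) * Real.exp (-((k:ℝ)+1)*α)))
    · intro k
      have h1qk : (0:ℝ) < 1 - Real.exp (-((k:ℝ)+1)*α) := by linarith [hQlt k]
      have : (0:ℝ) ≤ 4 * Real.exp (-((k:ℝ)+1)*α) * Real.sin (π*((k:ℝ)+1)*u)^2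
          / (1 - Real.exp (-((k:ℝ)+1)*α))^2 := by positivity
      exact mul_nonneg (hb _) (Real.log_nonneg (by linarith))
    · intro k
      have h1q : (0:ℝ) < 1 - Real.exp (-α) := by linarith
      have h1qk : (0:ℝ) < 1 - Real.exp (-((k:ℝ)+1)*α) := by linarith [hQlt k]
      have ht0 : (0:ℝ) ≤ 4 * Real.exp (-((k:ℝ)+1)*α) * Real.sin (π*((k:ℝ)+1)*u)^2
          / (1 - Real.exp (-((k:ℝ)+1)*α))^2 := by positivity
      have hlog : Real.log (1 + 4 * Real.exp (-((k:ℝ)+1)*α) * Real.sin (π*((k:ℝ)+1)*u)^2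
            / (1 - Real.exp (-((k:ℝ)+1)*α))^2)
          ≤ 4 * Real.exp (-((k:ℝ)+1)*α) * Real.sin (π*((k:ℝ)+1)*u)^2
            / (1 - Real.exp (-((k:ℝ)+1)*α))^2 := by
        have := Real.log_le_sub_one_of_pos (show (0:ℝ) < 1 + 4 * Real.exp (-((k:ℝ)+1)*α)
          * Real.sin (π*((k:ℝ)+1)*u)^2 / (1 - Real.exp (-((k:ℝ)+1)*α))^2 by linarith)
        linarith
      have hbound : 4 * Real.exp (-((k:ℝ)+1)*α) * Real.sin (π*((k:ℝ)+1)*u)^2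
            / (1 - Real.exp (-((k:ℝ)+1)*α))^2
          ≤ 4 * Real.exp (-((k:ℝ)+1)*α) / (1 - Real.exp (-α))^2 := by
        have hs := Real.sin_sq_le_one (π*((k:ℝ)+1)*u)
        have hnum : 4 * Real.exp (-((k:ℝ)+1)*α) * Real.sin (π*((k:ℝ)+1)*u)^2
            ≤ 4 * Real.exp (-((k:ℝ)+1)*α) := by nlinarith [hQpos k]
        calc 4 * Real.exp (-((k:ℝ)+1)*α) * Real.sin (π*((k:ℝ)+1)*u)^2
              / (1 - Real.exp (-((k:ℝ)+1)*α))^2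
            ≤ 4 * Real.exp (-((k:ℝ)+1)*α) / (1 - Real.exp (-((k:ℝ)+1)*α))^2 := by gcongr
          _ ≤ 4 * Real.exp (-((k:ℝ)+1)*α) / (1 - Real.exp (-α))^2 := by
              rw [div_le_div_iff₀ (by positivity) (by positivity)]
              have hle : 1 - Real.exp (-α) ≤ 1 - Real.exp (-((k:ℝ)+1)*α) := by
                linarith [hQle k]
              nlinarith [mul_le_mul hle hle h1q.le h1qk.le, hQpos k]
      calc b (k+1) * Real.log (1 + 4 * Real.exp (-((k:ℝ)+1)*α) * Real.sin (π*((k:ℝ)+1)*u)^2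
            / (1 - Real.exp (-((k:ℝ)+1)*α))^2)
          ≤ b (k+1) * (4 * Real.exp (-((k:ℝ)+1)*α) / (1 - Real.exp (-α))^2) :=
            mul_le_mul_of_nonneg_left (le_trans hlog hbound) (hb _)
        _ = (4 * ((1 - Real.exp (-α))^2)⁻¹) * (b (k+1) * Real.exp (-((k:ℝ)+1)*α)) := by
            field_simp
    · exact hsum0.mul_left _
  -- S4
  have S4 : Summable (fun k : ℕ => b (k+1) * Real.exp (-((k:ℝ)+1)*α)
      * Real.sin (π*((k:ℝ)+1)*u)^2) := by
    apply Summable.of_nonneg_of_le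
      (f := fun k : ℕ => b (k+1) * Real.exp (-((k:ℝ)+1)*α)) _ _ hsum0
    · intro k
      exact mul_nonneg (mul_nonneg (hb _) (le_of_lt (hQpos k))) (sq_nonneg _)
    · intro k
      have hs := Real.sin_sq_le_one (π*((k:ℝ)+1)*u)
      have hbq : (0:ℝ) ≤ b (k+1) * Real.exp (-((k:ℝ)+1)*α) :=
        mul_nonneg (hb _) (le_of_lt (hQpos k))
      exact mul_le_of_le_one_right hbq hs
  set z : ℂ := Complex.exp (-(α:ℂ) + 2*(π:ℂ)*Complex.I*(u:ℂ)) with hzdef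
  have hre0 : (-(α:ℂ) + 2*(π:ℂ)*Complex.I*(u:ℂ)).re = -α := by simp
  have hznorm : ∀ k : ℕ, ‖z^(k+1)‖ = Real.exp (-((k:ℝ)+1)*α) := by
    intro k
    rw [norm_pow, hzdef, Complex.norm_exp, hre0, ← Real.exp_nat_mul]
    congr 1
    push_cast; ring
  have S3 : Summable (fun k : ℕ => ((b (k+1)):ℂ) * Complex.log (1 - z^(k+1))) := by
    apply Summable.of_norm
    apply Summable.of_nonneg_of_le
      (f := fun k : ℕ => (Real.exp (-α)*(1-Real.exp (-α))⁻¹/2 + 1)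
        * (b (k+1) * Real.exp (-((k:ℝ)+1)*α)))
      (fun k => norm_nonneg _)
    · intro k
      have h1 : ‖((b (k+1)):ℂ)‖ = b (k+1) := by
        rw [Complex.norm_real, Real.norm_eq_abs, abs_of_nonneg (hb _)]
      have hnv : ‖-(z^(k+1))‖ = Real.exp (-((k:ℝ)+1)*α) := by
        rw [norm_neg, hznorm k]
      have hlt : ‖-(z^(k+1))‖ < 1 := by rw [hnv]; exact hQlt k
      have hle := Complex.norm_log_one_add_le hlt
      rw [show (1:ℂ) + -(z^(k+1)) = 1 - z^(k+1) by ring, hnv] at hle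
      have hb2 := aux_self_bound _ _ (hQpos k) (hQle k) hq1
      calc ‖((b (k+1)):ℂ) * Complex.log (1 - z^(k+1))‖
          = b (k+1) * ‖Complex.log (1 - z^(k+1))‖ := by rw [norm_mul, h1]
        _ ≤ b (k+1) * (Real.exp (-((k:ℝ)+1)*α)^2*(1-Real.exp (-((k:ℝ)+1)*α))⁻¹/2
              + Real.exp (-((k:ℝ)+1)*α)) := mul_le_mul_of_nonneg_left hle (hb _)
        _ ≤ b (k+1) * ((Real.exp (-α)*(1-Real.exp (-α))⁻¹/2 + 1)*Real.exp (-((k:ℝ)+1)*α)) :=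
            mul_le_mul_of_nonneg_left hb2 (hb _)
        _ = (Real.exp (-α)*(1-Real.exp (-α))⁻¹/2 + 1)
              * (b (k+1) * Real.exp (-((k:ℝ)+1)*α)) := by ring
    · exact hsum0.mul_left _
  have hlog : ∀ k : ℕ, Real.log ‖1 - z^(k+1)‖
      = Real.log (1 - Real.exp (-((k:ℝ)+1)*α))
        + (1/2)*Real.log (1 + 4*Real.exp (-((k:ℝ)+1)*α)*Real.sin (π*((k:ℝ)+1)*u)^2
            /(1 - Real.exp (-((k:ℝ)+1)*α))^2) := fun k =>
    aux_log_abs (hQpos k) (hQlt k) _ (by rw [hzdef]; exact aux_normSq α u k)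
  have hpow : ∀ k : ℕ, Real.exp (-α) ^ (k+1) = Real.exp (-((k:ℝ)+1)*α) := by
    intro k
    rw [← Real.exp_nat_mul]
    congr 1
    push_cast; ring
  have hFb : Fb b (Real.exp (-α))
      = -∑' k : ℕ, b (k+1) * Real.log (1 - Real.exp (-((k:ℝ)+1)*α)) := by
    unfold Fb
    congr 1
    exact tsum_congr fun k => by rw [hpow k]
  have hFbC : (FbC b z).re
      = -∑' k : ℕ, b (k+1) * Real.log ‖1 - z^(k+1)‖ := by
    unfold FbC
    rw [Complex.neg_re, Complex.re_tsum S3]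
    congr 1
    exact tsum_congr fun k => by
      simp [Complex.mul_re, Complex.log_re]
  have hsplit : (∑' k : ℕ, b (k+1) * Real.log ‖1 - z^(k+1)‖)
      = (∑' k : ℕ, b (k+1) * Real.log (1 - Real.exp (-((k:ℝ)+1)*α)))
        + (1/2) * ∑' k : ℕ, b (k+1) *
            Real.log (1 + 4*Real.exp (-((k:ℝ)+1)*α)*Real.sin (π*((k:ℝ)+1)*u)^2
              /(1 - Real.exp (-((k:ℝ)+1)*α))^2) := by
    rw [← tsum_mul_left, ← Summable.tsum_add S1 (S2.mul_left _)]
    exact tsum_congr fun k => by rw [hlog k]; ring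
  have hEq : Fb b (Real.exp (-α)) - (FbC b z).re
      = (1/2) * ∑' k : ℕ, b (k+1) *
          Real.log (1 + 4*Real.exp (-((k:ℝ)+1)*α)*Real.sin (π*((k:ℝ)+1)*u)^2
            /(1 - Real.exp (-((k:ℝ)+1)*α))^2) := by
    rw [hFb, hFbC, hsplit]; ring
  constructor
  · exact hEq
  · rw [hEq]
    have per : ∀ k : ℕ, Real.log 5 * (b (k+1) * Real.exp (-((k:ℝ)+1)*α)
          * Real.sin (π*((k:ℝ)+1)*u)^2)
        ≤ b (k+1) * Real.log (1 + 4*Real.exp (-((k:ℝ)+1)*α)*Real.sin (π*((k:ℝ)+1)*u)^2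
            /(1 - Real.exp (-((k:ℝ)+1)*α))^2) := by
      intro k
      have hs := Real.sin_sq_le_one (π*((k:ℝ)+1)*u)
      have hx0 : 0 ≤ Real.exp (-((k:ℝ)+1)*α) * Real.sin (π*((k:ℝ)+1)*u)^2 := by positivity
      have hx1 : Real.exp (-((k:ℝ)+1)*α) * Real.sin (π*((k:ℝ)+1)*u)^2 ≤ 1 := by
        nlinarith [hQpos k, hQlt k]
      have h5 := aux_log5 hx0 hx1
      have h1qk : (0:ℝ) < 1 - Real.exp (-((k:ℝ)+1)*α) := by linarith [hQlt k]
      have hmono : Real.log (1 + 4*(Real.exp (-((k:ℝ)+1)*α) * Real.sin (π*((k:ℝ)+1)*u)^2))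
          ≤ Real.log (1 + 4*Real.exp (-((k:ℝ)+1)*α)*Real.sin (π*((k:ℝ)+1)*u)^2
              /(1 - Real.exp (-((k:ℝ)+1)*α))^2) := by
        apply Real.log_le_log (by positivity)
        have hsq1 : (1 - Real.exp (-((k:ℝ)+1)*α))^2 ≤ 1 := by
          nlinarith [hQpos k, hQlt k]
        have ht : 4*Real.exp (-((k:ℝ)+1)*α)*Real.sin (π*((k:ℝ)+1)*u)^2
            ≤ 4*Real.exp (-((k:ℝ)+1)*α)*Real.sin (π*((k:ℝ)+1)*u)^2
              /(1 - Real.exp (-((k:ℝ)+1)*α))^2 := by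
          rw [le_div_iff₀ (by positivity)]
          nlinarith [hx0]
        linarith
      calc Real.log 5 * (b (k+1) * Real.exp (-((k:ℝ)+1)*α) * Real.sin (π*((k:ℝ)+1)*u)^2)
          = b (k+1) * (Real.log 5 * (Real.exp (-((k:ℝ)+1)*α) * Real.sin (π*((k:ℝ)+1)*u)^2)) := by
            ring
        _ ≤ b (k+1) * Real.log (1 + 4*(Real.exp (-((k:ℝ)+1)*α)
              * Real.sin (π*((k:ℝ)+1)*u)^2)) := mul_le_mul_of_nonneg_left h5 (hb _)
        _ ≤ b (k+1) * Real.log (1 + 4*Real.exp (-((k:ℝ)+1)*α)*Real.sin (π*((k:ℝ)+1)*u)^2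
              /(1 - Real.exp (-((k:ℝ)+1)*α))^2) := mul_le_mul_of_nonneg_left hmono (hb _)
    have hts := Summable.tsum_le_tsum per (S4.mul_left (Real.log 5)) S2
    rw [tsum_mul_left] at hts
    linarith
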